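/- Let G be a group with subgroups L ≤ H ≤ G. Suppose H acts by left translation on a connected graph (H/L, E_{H/L}) with all edge stabilisers infinite, and G acts by left translation on a connected graph (G/H, E_{G/H}); for each G-orbit of edges of (G/H, E_{G/H}) pick a representative f = {eH, g(f)H} incident to eH, with g(f) ∈ G chosen so that L ∩ g(f)Lg(f)⁻¹ is infinite. Then the blown-up graph on vertex set G ×_H (H/L) with edge set E = {{[(g,h₁L)],[(g,h₂L)]} : g ∈ G, {h₁L,h₂L} ∈ E_{H/L}} ∪ {{[(g,eL)],[(g·g(f),eL)]} : g ∈ G, f ∈ F} is connected, carries a left-translation G-action, and every edge stabiliser is infinite. -/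

import Mathlib

def bpRel {G : Type*} [Group G] (H L : Subgroup G) :
    G × (H ⧸ L.subgroupOf H) → G × (H ⧸ L.subgroupOf H) → Prop :=
  fun p q => ∃ h : H, p.1 = q.1 * h ∧ q.2 = h • p.2

/-- The balanced product `G ×_H (H/L)`. -/
def BalancedProduct {G : Type*} [Group G] (H L : Subgroup G) : Type _ :=
  Quot (bpRel H L)

/-- The left-translation action of `G` on the balanced product. -/
def bpSmul {G : Type*} [Group G] (H L : Subgroup G) (g' : G) :
    BalancedProduct H L → BalancedProduct H L :=
  Quot.map (fun p => (g' * p.1, p.2))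
    (by rintro p q ⟨h, h1, h2⟩; exact ⟨h, by simp only []; rw [h1, mul_assoc], h2⟩)

/-- The edge set of the blown-up graph. -/
def blowupEdges {G : Type*} [Group G] (H L : Subgroup G)
    (EHL : Set (Sym2 (H ⧸ L.subgroupOf H))) (F : Set (Sym2 (G ⧸ H)))
    (gg : Sym2 (G ⧸ H) → G) : Set (Sym2 (BalancedProduct H L)) :=
  {p | (∃ (g : G) (x₁ x₂ : H ⧸ L.subgroupOf H), s(x₁, x₂) ∈ EHL ∧
          p = s(Quot.mk (bpRel H L) (g, x₁), Quot.mk (bpRel H L) (g, x₂))) ∨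
       (∃ (g : G) (f : Sym2 (G ⧸ H)), f ∈ F ∧
          p = s(Quot.mk (bpRel H L) (g, ((1 : H) : H ⧸ L.subgroupOf H)),
                Quot.mk (bpRel H L) (g * gg f, ((1 : H) : H ⧸ L.subgroupOf H))))}

/-- Blowing up a connected `G`-graph on `G/H` by a connected `H`-graph on `H/L` with
infinite edge stabilisers yields a connected `G`-graph on `G ×_H (H/L) ≅ G/L` with
infinite edge stabilisers. -/
lemma bp_mk_mul {G : Type*} [Group G] (H L : Subgroup G) (g : G) (h : H)
    (x : H ⧸ L.subgroupOf H) :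
    Quot.mk (bpRel H L) (g * h, x) = Quot.mk (bpRel H L) (g, h • x) :=
  Quot.sound ⟨h, rfl, rfl⟩

lemma bp_smul_one {G : Type*} [Group G] (H L : Subgroup G) (x : G) (hx : x ∈ L)
    (hxH : x ∈ H) :
    (⟨x, hxH⟩ : H) • ((1 : H) : H ⧸ L.subgroupOf H) = ((1 : H) : H ⧸ L.subgroupOf H) := by
  show (((⟨x, hxH⟩ : H) * 1 : H) : H ⧸ L.subgroupOf H) = ((1 : H) : H ⧸ L.subgroupOf H)
  rw [mul_one]
  exact (QuotientGroup.eq).mpr (by simpa [Subgroup.mem_subgroupOf] using hx)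

theorem blowup_graph
    {G : Type*} [Group G] (H L : Subgroup G) (hLH : L ≤ H)
    (EHL : Set (Sym2 (H ⧸ L.subgroupOf H)))
    (hHinv : ∀ (h : H), ∀ e ∈ EHL, Sym2.map (fun x => h • x) e ∈ EHL)
    (hHconn : ∀ x y : H ⧸ L.subgroupOf H,
      Relation.ReflTransGen (fun a b => s(a, b) ∈ EHL) x y)
    (hHstab : ∀ e ∈ EHL, {h : H | Sym2.map (fun x => h • x) e = e}.Infinite)
    (EGH : Set (Sym2 (G ⧸ H)))
    (hGinv : ∀ (g : G), ∀ e ∈ EGH, Sym2.map (fun x => g • x) e ∈ EGH)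
    (hGconn : ∀ x y : G ⧸ H,
      Relation.ReflTransGen (fun a b => s(a, b) ∈ EGH) x y)
    (F : Set (Sym2 (G ⧸ H))) (hFE : F ⊆ EGH) (gg : Sym2 (G ⧸ H) → G)
    (hF : ∀ f ∈ F, f = s(((1 : G) : G ⧸ H), ((gg f : G) : G ⧸ H)) ∧
      ((L : Set G) ∩ ((fun x => gg f * x * (gg f)⁻¹) '' (L : Set G))).Infinite)
    (horb : ∀ e ∈ EGH, ∃ f ∈ F, ∃ g : G, Sym2.map (fun x => g • x) f = e) :
    -- the blown-up graph carries a left-translation `G`-action,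
    (∀ (g' : G), ∀ e ∈ blowupEdges H L EHL F gg,
      Sym2.map (bpSmul H L g') e ∈ blowupEdges H L EHL F gg) ∧
    -- is connected,
    (∀ a b : BalancedProduct H L,
      Relation.ReflTransGen (fun u v => s(u, v) ∈ blowupEdges H L EHL F gg) a b) ∧
    -- and every edge stabiliser is infinite
    (∀ e ∈ blowupEdges H L EHL F gg,
      {g' : G | Sym2.map (bpSmul H L g') e = e}.Infinite) := by
  set R : BalancedProduct H L → BalancedProduct H L → Prop :=
    fun u v => s(u, v) ∈ blowupEdges H L EHL F gg with hR
  -- invariance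
  have inv : ∀ (g' : G), ∀ e ∈ blowupEdges H L EHL F gg,
      Sym2.map (bpSmul H L g') e ∈ blowupEdges H L EHL F gg := by
    rintro g' e (⟨g, x₁, x₂, hE, rfl⟩ | ⟨g, f, hf, rfl⟩)
    · exact Or.inl ⟨g' * g, x₁, x₂, hE, by erw [Sym2.map_pair_eq]; rfl⟩
    · exact Or.inr ⟨g' * g, f, hf, by erw [Sym2.map_pair_eq, mul_assoc]; rfl⟩
  refine ⟨inv, ?_, ?_⟩
  · -- connectivity
    have Rsymm : Symmetric R := by
      intro u v h
      show s(v, u) ∈ blowupEdges H L EHL F gg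
      rw [Sym2.eq_swap]; exact h
    have fiber : ∀ (g : G) (x y : H ⧸ L.subgroupOf H),
        Relation.ReflTransGen R (Quot.mk _ (g, x)) (Quot.mk _ (g, y)) := by
      intro g x y
      exact (hHconn x y).lift (fun z => Quot.mk (bpRel H L) (g, z))
        (fun a b hab => Or.inl ⟨g, a, b, hab, rfl⟩)
    have coset : ∀ (g g' : G), (g : G ⧸ H) = (g' : G ⧸ H) →
        Relation.ReflTransGen R (Quot.mk _ (g, ((1:H) : H ⧸ L.subgroupOf H)))
          (Quot.mk _ (g', ((1:H) : H ⧸ L.subgroupOf H))) := by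
      intro g g' hgg
      have hmem : g⁻¹ * g' ∈ H := (QuotientGroup.eq).mp hgg
      have : g' = g * (⟨g⁻¹ * g', hmem⟩ : H) := by simp
      rw [this, bp_mk_mul]
      exact fiber g _ _
    have edge_step : ∀ (g g' : G), s((g : G ⧸ H), (g' : G ⧸ H)) ∈ EGH →
        Relation.ReflTransGen R (Quot.mk _ (g, ((1:H) : H ⧸ L.subgroupOf H)))
          (Quot.mk _ (g', ((1:H) : H ⧸ L.subgroupOf H))) := by
      intro g g' he
      obtain ⟨f, hfF, g₀, hmap⟩ := horb _ he
      obtain ⟨hf1, -⟩ := hF f hfF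
      rw [hf1, Sym2.map_pair_eq] at hmap
      have h1 : g₀ • ((1 : G) : G ⧸ H) = ((g₀ : G) : G ⧸ H) := by
        show ((g₀ * 1 : G) : G ⧸ H) = _; rw [mul_one]
      have h2 : g₀ • ((gg f : G) : G ⧸ H) = ((g₀ * gg f : G) : G ⧸ H) := rfl
      rw [h1, h2] at hmap
      have base : Relation.ReflTransGen R
          (Quot.mk _ (g₀, ((1:H) : H ⧸ L.subgroupOf H)))
          (Quot.mk _ (g₀ * gg f, ((1:H) : H ⧸ L.subgroupOf H))) :=
        Relation.ReflTransGen.single (Or.inr ⟨g₀, f, hfF, rfl⟩)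
      rcases Sym2.eq_iff.mp hmap with ⟨ha, hb⟩ | ⟨ha, hb⟩
      · exact ((coset g g₀ ha.symm).trans base).trans (coset _ g' hb)
      · exact ((coset g (g₀ * gg f) hb.symm).trans
          (haveI : Std.Symm R := ⟨Rsymm⟩; Relation.ReflTransGen.symmetric.symm _ _ base)).trans (coset g₀ g' ha)
    have ones : ∀ (g g' : G),
        Relation.ReflTransGen R (Quot.mk _ (g, ((1:H) : H ⧸ L.subgroupOf H)))
          (Quot.mk _ (g', ((1:H) : H ⧸ L.subgroupOf H))) := by
      intro g g'
      have key : ∀ c : G ⧸ H, Relation.ReflTransGen (fun a b => s(a, b) ∈ EGH) (g : G ⧸ H) c →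
          ∀ g₂ : G, (g₂ : G ⧸ H) = c →
          Relation.ReflTransGen R (Quot.mk _ (g, ((1:H) : H ⧸ L.subgroupOf H)))
            (Quot.mk _ (g₂, ((1:H) : H ⧸ L.subgroupOf H))) := by
        intro c hc
        induction hc with
        | refl => exact fun g₂ h => coset g g₂ h.symm
        | @tail c d hgc hcd ih =>
          intro g₂ hg₂
          obtain ⟨g₁, hg₁⟩ := QuotientGroup.mk_surjective c
          exact (ih g₁ hg₁).trans (edge_step g₁ g₂ (by rw [hg₁, hg₂]; exact hcd))
      exact key _ (hGconn _ _) g' rfl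
    intro a b
    induction a using Quot.ind with | _ p =>
    induction b using Quot.ind with | _ q =>
    obtain ⟨g, x⟩ := p
    obtain ⟨g', y⟩ := q
    exact ((fiber g x ((1:H) : H ⧸ L.subgroupOf H)).trans (ones g g')).trans (fiber g' ((1:H) : H ⧸ L.subgroupOf H) y)
  · -- infinite stabilisers
    rintro e (⟨g, x₁, x₂, hE, rfl⟩ | ⟨g, f, hf, rfl⟩)
    · have hinj : Function.Injective (fun h : H => g * (h : G) * g⁻¹) := by
        intro a b hab
        simp only [] at hab
        exact Subtype.ext (mul_left_cancel (mul_right_cancel hab))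
      refine Set.Infinite.mono ?_
        ((hHstab _ hE).image (hinj.injOn))
      rintro - ⟨h, hh, rfl⟩
      show Sym2.map (bpSmul H L (g * h * g⁻¹)) _ = _
      have key : ∀ x : H ⧸ L.subgroupOf H,
          bpSmul H L (g * h * g⁻¹) (Quot.mk _ (g, x)) = Quot.mk (bpRel H L) (g, h • x) := by
        intro x
        show Quot.mk (bpRel H L) (g * h * g⁻¹ * g, x) = _
        rw [show g * (h:G) * g⁻¹ * g = g * h by group]
        exact bp_mk_mul H L g h x
      erw [Sym2.map_pair_eq, key, key]
      have : s(h • x₁, h • x₂) = s(x₁, x₂) := by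
        have h2 := hh
        simp only [Set.mem_setOf_eq, Sym2.map_pair_eq] at h2
        exact h2
      rcases Sym2.eq_iff.mp this with ⟨ha, hb⟩ | ⟨ha, hb⟩
      · rw [ha, hb]
        rfl
      · rw [ha, hb, Sym2.eq_swap]
        rfl
    · obtain ⟨-, hinf⟩ := hF f hf
      have hinj : Set.InjOn (fun x : G => g * x * g⁻¹)
          ((L : Set G) ∩ ((fun x => gg f * x * (gg f)⁻¹) '' (L : Set G))) := by
        intro a _ b _ hab
        simp only [] at hab
        exact mul_left_cancel (mul_right_cancel hab)
      refine Set.Infinite.mono ?_ (hinf.image hinj)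
      rintro - ⟨x, ⟨hxL, y, hyL, hxy⟩, rfl⟩
      show Sym2.map (bpSmul H L (g * x * g⁻¹)) _ = _
      erw [Sym2.map_pair_eq]
      have v1 : bpSmul H L (g * x * g⁻¹) (Quot.mk _ (g, ((1:H) : H ⧸ L.subgroupOf H)))
          = Quot.mk (bpRel H L) (g, ((1:H) : H ⧸ L.subgroupOf H)) := by
        show Quot.mk (bpRel H L) (g * x * g⁻¹ * g, _) = _
        rw [show g * x * g⁻¹ * g = g * (⟨x, hLH hxL⟩ : H) by simp,
          bp_mk_mul, bp_smul_one H L x hxL]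
      have v2 : bpSmul H L (g * x * g⁻¹) (Quot.mk _ (g * gg f, ((1:H) : H ⧸ L.subgroupOf H)))
          = Quot.mk (bpRel H L) (g * gg f, ((1:H) : H ⧸ L.subgroupOf H)) := by
        show Quot.mk (bpRel H L) (g * x * g⁻¹ * (g * gg f), _) = _
        have hx : x * gg f = gg f * y := by rw [← hxy]; group
        rw [show g * x * g⁻¹ * (g * gg f) = g * (x * gg f) by group, hx,
          show g * (gg f * y) = g * gg f * (⟨y, hLH hyL⟩ : H) by simp [mul_assoc],
          bp_mk_mul, bp_smul_one H L y hyL]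
      rw [v1, v2]
      rfl
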